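/- Let d ≥ 1, let rˡ, rᵇ, r^{1,b}, …, r^{d,b}, β₁, …, β_d, Bˡ be real numbers, and define gʰˡ(x,y,a) := Σ_{i=1}^d βᵢaᵢ − x·rˡBˡ − Σ_{i=1}^d r^{i,b}aᵢ⁺ + rˡ·(y + xBˡ + Σ_{i=1}^d aᵢ⁻)⁺ − rᵇ·(y + xBˡ + Σ_{i=1}^d aᵢ⁻)⁻. Then for every λ > 0 and all x, y, c ∈ ℝ, a ∈ ℝᵈ: λ·gʰˡ(x, λ⁻¹y + c, λ⁻¹a) = gʰˡ(λx, y + λc, a). -/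

import Mathlib

/-- Positive homogeneity identity of the hedger's generator `g^{h,l}`:
`λ·gʰˡ(x, λ⁻¹y + c, λ⁻¹a) = gʰˡ(λx, y + λc, a)` for every `λ > 0`. -/
theorem stmt_11 (d : ℕ) (hd : 1 ≤ d) (rl rb Bl : ℝ) (rib β : Fin d → ℝ)
    (ghl : ℝ → ℝ → (Fin d → ℝ) → ℝ)
    (hghl : ∀ x y a, ghl x y a = (∑ i, β i * a i) - x * rl * Bl
      - (∑ i, rib i * max (a i) 0)
      + rl * max (y + x * Bl + ∑ i, max (-(a i)) 0) 0
      - rb * max (-(y + x * Bl + ∑ i, max (-(a i)) 0)) 0)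
    (lam : ℝ) (hlam : 0 < lam) (x y c : ℝ) (a : Fin d → ℝ) :
    lam * ghl x (lam⁻¹ * y + c) (fun i => lam⁻¹ * a i)
      = ghl (lam * x) (y + lam * c) a := by
  have hl0 : lam ≠ 0 := ne_of_gt hlam
  have hinv : (0:ℝ) ≤ lam⁻¹ := (inv_nonneg).mpr hlam.le
  have hmax : ∀ w : ℝ, max (lam⁻¹ * w) 0 = lam⁻¹ * max w 0 := by
    intro w; rw [mul_max_of_nonneg _ _ hinv, mul_zero]
  have hmaxl : ∀ w : ℝ, lam * max w 0 = max (lam * w) 0 := by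
    intro w; rw [mul_max_of_nonneg _ _ hlam.le, mul_zero]
  rw [hghl, hghl]
  simp only [neg_mul, hmax]
  have hsum : (∑ i, max (-(lam⁻¹ * a i)) 0) = lam⁻¹ * ∑ i, max (-(a i)) 0 := by
    rw [Finset.mul_sum]
    refine Finset.sum_congr rfl fun i _ => ?_
    rw [← hmax, mul_neg]
  rw [hsum]
  have harg : lam⁻¹ * y + c + x * Bl + lam⁻¹ * ∑ i, max (-(a i)) 0
      = lam⁻¹ * (y + lam * c + lam * x * Bl + ∑ i, max (-(a i)) 0) := by
    field_simp
  rw [harg]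
  rw [show -(lam⁻¹ * (y + lam * c + lam * x * Bl + ∑ i, max (-(a i)) 0))
      = lam⁻¹ * -(y + lam * c + lam * x * Bl + ∑ i, max (-(a i)) 0) by ring,
    hmax, hmax]
  simp only [show ∀ i, β i * (lam⁻¹ * a i) = lam⁻¹ * (β i * a i) from fun i => by ring,
    show ∀ i, rib i * (lam⁻¹ * max (a i) 0) = lam⁻¹ * (rib i * max (a i) 0) from fun i => by ring,
    ← Finset.mul_sum]
  field_simp
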